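/- The number of binary vectors of length n with exactly ρ runs (2 ≤ ρ ≤ n) and exactly μ middle runs of length 1 (0 ≤ μ ≤ ρ-2) equals 2·binom(ρ-2, μ)·binom(n-ρ+1, ρ-μ-1). -/

import Mathlib

/-- Extend a length-`n` binary word to `ℕ → Bool` (by `false` beyond `n`). -/
def ext (n : ℕ) (y : Fin n → Bool) : ℕ → Bool :=
  fun i => if h : i < n then y ⟨i, h⟩ else false

/-- `rho n x`: the number of runs (maximal blocks of equal consecutive symbols)
of the length-`n` word `x` (for `n ≥ 1`): one plus the number of positions
where the symbol changes. -/
def rho (n : ℕ) (x : ℕ → Bool) : ℕ :=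
  1 + ((Finset.range (n - 1)).filter (fun i => x i ≠ x (i + 1))).card

/-- `mu n x`: the number of middle runs of length 1 (runs of length exactly 1
that are neither the first nor the last run) of the length-`n` word `x`. -/
def mu (n : ℕ) (x : ℕ → Bool) : ℕ :=
  ((Finset.Icc 1 (n - 2)).filter
    (fun i => x (i - 1) ≠ x i ∧ x i ≠ x (i + 1))).card

/-- **Counting words by runs and middle-1-runs.**
For `2 ≤ ρ ≤ n` and `μ ≤ ρ - 2`, the number of binary words of length `n` with
exactly `ρ` runs and exactly `μ` middle-1-runs is
`2·C(ρ-2, μ)·C(n-ρ+1, ρ-μ-1)`. -/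

def adjc (S : Finset ℕ) : ℕ := (S.filter (fun i => 0 < i ∧ i - 1 ∈ S)).card

def Fc (m k μ : ℕ) : ℕ :=
  (((Finset.range m).powersetCard k).filter (fun S => adjc S = μ)).card

def Gc (m k μ : ℕ) : ℕ :=
  (((Finset.range m).powersetCard k).filter (fun S => adjc S = μ ∧ m - 1 ∈ S)).card

lemma Fc_split (m k μ : ℕ) (hm : 1 ≤ m) :
    Fc (m) k μ = Fc (m - 1) k μ + Gc m k μ := by
  unfold Fc Gc
  rw [← Finset.filter_filter (fun S => adjc S = μ) (fun S => m - 1 ∈ S)]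
  rw [← Finset.card_filter_add_card_filter_not
    (s := ((Finset.range m).powersetCard k).filter (fun S => adjc S = μ))
    (p := fun S => m - 1 ∈ S), Nat.add_comm]
  congr 2
  ext S
  simp only [Finset.mem_filter, Finset.mem_powersetCard, Finset.subset_iff, Finset.mem_range]
  constructor
  · rintro ⟨⟨⟨h1, h2⟩, h3⟩, h4⟩
    refine ⟨⟨fun i hi => ?_, h2⟩, h3⟩
    have hne : i ≠ m - 1 := fun he => h4 (he ▸ hi)
    have := h1 hi
    omega
  · rintro ⟨⟨h1, h2⟩, h3⟩
    exact ⟨⟨⟨fun i hi => by have := h1 hi; omega, h2⟩, h3⟩, fun hm' => by have := h1 hm'; omega⟩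

lemma adjc_lt_card (S : Finset ℕ) (h : S.Nonempty) : adjc S < S.card := by
  apply Finset.card_lt_card
  constructor
  · exact Finset.filter_subset _ _
  · intro hsub
    have hmin := S.min'_mem h
    have := hsub hmin
    rw [Finset.mem_filter] at this
    obtain ⟨_, hpos, hm⟩ := this
    have := Finset.min'_le S _ hm
    omega

lemma adjc_insert_top (m : ℕ) (T : Finset ℕ) (hT : ∀ i ∈ T, i < m + 1) :
    adjc (insert (m + 1) T) = adjc T + (if m ∈ T then 1 else 0) := by
  have hnm : m + 1 ∉ T := fun h => by have := hT _ h; omega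
  unfold adjc
  have hset : (insert (m+1) T).filter (fun i => 0 < i ∧ i - 1 ∈ insert (m+1) T)
      = (if m ∈ T then insert (m+1) (T.filter (fun i => 0 < i ∧ i - 1 ∈ T))
         else T.filter (fun i => 0 < i ∧ i - 1 ∈ T)) := by
    ext i
    by_cases hmT : m ∈ T <;> simp only [hmT, if_true, if_false, Finset.mem_filter,
      Finset.mem_insert] <;> constructor
    · rintro ⟨hi | hi, hpos, hi1⟩
      · exact Or.inl hi
      · right
        refine ⟨hi, hpos, ?_⟩
        rcases hi1 with h | h
        · exfalso; have := hT _ hi; omega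
        · exact h
    · rintro (hi | ⟨hi, hpos, hi1⟩)
      · subst hi; exact ⟨Or.inl rfl, by omega, Or.inr hmT⟩
      · exact ⟨Or.inr hi, hpos, Or.inr hi1⟩
    · rintro ⟨hi | hi, hpos, hi1⟩
      · subst hi
        rcases hi1 with h | h
        · omega
        · simp at h; exact absurd h hmT
      · refine ⟨hi, hpos, ?_⟩
        rcases hi1 with h | h
        · exfalso; have := hT _ hi; omega
        · exact h
    · rintro ⟨hi, hpos, hi1⟩
      exact ⟨Or.inr hi, hpos, Or.inr hi1⟩
  rw [hset]
  by_cases hmT : m ∈ T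
  · simp only [hmT, if_true]
    rw [Finset.card_insert_of_notMem]
    intro h
    exact hnm (Finset.mem_of_mem_filter _ h)
  · simp [hmT]

lemma Fc_zero (m : ℕ) : Fc m 0 0 = 1 := by
  unfold Fc
  rw [Finset.powersetCard_zero]
  rw [Finset.filter_singleton]
  simp [adjc]

lemma Fc_big (m k μ : ℕ) (h : m < k) : Fc m k μ = 0 := by
  unfold Fc
  rw [Finset.powersetCard_eq_empty.2 (by simpa using h)]
  simp

lemma Gc_big (m k μ : ℕ) (h : m < k) : Gc m k μ = 0 := by
  unfold Gc
  rw [Finset.powersetCard_eq_empty.2 (by simpa using h)]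
  simp

lemma Fc_mu_big (m k μ : ℕ) (hk : 1 ≤ k) (h : k ≤ μ) : Fc m k μ = 0 := by
  unfold Fc
  rw [Finset.card_eq_zero, Finset.filter_eq_empty_iff]
  rintro S hS hadj
  rw [Finset.mem_powersetCard] at hS
  have hne : S.Nonempty := Finset.card_pos.1 (by omega)
  have := adjc_lt_card S hne
  omega

lemma Gc_mu_big (m k μ : ℕ) (hk : 1 ≤ k) (h : k ≤ μ) : Gc m k μ = 0 := by
  unfold Gc
  rw [Finset.card_eq_zero, Finset.filter_eq_empty_iff]
  rintro S hS ⟨hadj, _⟩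
  rw [Finset.mem_powersetCard] at hS
  have hne : S.Nonempty := Finset.card_pos.1 (by omega)
  have := adjc_lt_card S hne
  omega

lemma Gc_split (m k μ : ℕ) :
    Gc (m+2) k μ =
      (((Finset.range (m+2)).powersetCard k).filter
        (fun S => (adjc S = μ ∧ m + 1 ∈ S) ∧ m ∈ S)).card +
      (((Finset.range (m+2)).powersetCard k).filter
        (fun S => (adjc S = μ ∧ m + 1 ∈ S) ∧ ¬ (m ∈ S))).card := by
  unfold Gc
  have h1 : m + 2 - 1 = m + 1 := by omega
  rw [h1]
  rw [← Finset.card_filter_add_card_filter_not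
    (s := ((Finset.range (m+2)).powersetCard k).filter (fun S => adjc S = μ ∧ m + 1 ∈ S))
    (p := fun S => m ∈ S)]
  rw [Finset.filter_filter, Finset.filter_filter]

lemma bijB (m k μ : ℕ) :
    (((Finset.range (m+2)).powersetCard (k+1)).filter
      (fun S => (adjc S = μ ∧ m + 1 ∈ S) ∧ ¬ (m ∈ S))).card = Fc m k μ := by
  unfold Fc
  apply Finset.card_bij' (i := fun S _ => S.erase (m+1)) (j := fun T _ => insert (m+1) T)
  case hi =>
    rintro S hS
    rw [Finset.mem_filter, Finset.mem_powersetCard] at hS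
    obtain ⟨⟨hsub, hcard⟩, ⟨hadj, hm1⟩, hm0⟩ := hS
    rw [Finset.mem_filter, Finset.mem_powersetCard]
    have hsub' : S.erase (m+1) ⊆ Finset.range m := by
      intro i hi
      rw [Finset.mem_erase] at hi
      obtain ⟨hne, hiS⟩ := hi
      have := hsub hiS
      rw [Finset.mem_range] at this ⊢
      have : i ≠ m := fun he => hm0 (he ▸ hiS)
      omega
    refine ⟨⟨hsub', by rw [Finset.card_erase_of_mem hm1]; omega⟩, ?_⟩
    have hins : insert (m+1) (S.erase (m+1)) = S := Finset.insert_erase hm1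
    have hT : ∀ i ∈ S.erase (m+1), i < m + 1 := by
      intro i hi; have := hsub' hi; rw [Finset.mem_range] at this; omega
    have hmT : m ∉ S.erase (m+1) := fun h => hm0 (Finset.mem_of_mem_erase h)
    have := adjc_insert_top m (S.erase (m+1)) hT
    rw [hins, if_neg hmT] at this
    omega
  case hj =>
    rintro T hT
    rw [Finset.mem_filter, Finset.mem_powersetCard] at hT
    obtain ⟨⟨hsub, hcard⟩, hadj⟩ := hT
    rw [Finset.mem_filter, Finset.mem_powersetCard]
    have hT' : ∀ i ∈ T, i < m + 1 := by
      intro i hi; have := hsub hi; rw [Finset.mem_range] at this; omega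
    have hm1T : m + 1 ∉ T := fun h => by have := hT' _ h; omega
    have hmT : m ∉ T := fun h => by have := hsub h; rw [Finset.mem_range] at this; omega
    have hAdj := adjc_insert_top m T hT'
    rw [if_neg hmT] at hAdj
    refine ⟨⟨?_, ?_⟩, ⟨by omega, Finset.mem_insert_self _ _⟩, ?_⟩
    · intro i hi
      rw [Finset.mem_insert] at hi
      rw [Finset.mem_range]
      rcases hi with h | h
      · omega
      · have := hT' _ h; omega
    · rw [Finset.card_insert_of_notMem hm1T, hcard]
    · rw [Finset.mem_insert]
      rintro (h | h)
      · omega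
      · exact hmT h
  case left_inv =>
    intro S hS
    rw [Finset.mem_filter] at hS
    exact Finset.insert_erase hS.2.1.2
  case right_inv =>
    intro T hT
    rw [Finset.mem_filter, Finset.mem_powersetCard] at hT
    apply Finset.erase_insert
    intro h
    have := hT.1.1 h
    rw [Finset.mem_range] at this
    omega

lemma bijA (m k μ : ℕ) :
    (((Finset.range (m+2)).powersetCard (k+1)).filter
      (fun S => (adjc S = μ + 1 ∧ m + 1 ∈ S) ∧ m ∈ S)).card = Gc (m+1) k μ := by
  unfold Gc
  have hm1 : m + 1 - 1 = m := by omega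
  rw [hm1]
  apply Finset.card_bij' (i := fun S _ => S.erase (m+1)) (j := fun T _ => insert (m+1) T)
  case hi =>
    rintro S hS
    rw [Finset.mem_filter, Finset.mem_powersetCard] at hS
    obtain ⟨⟨hsub, hcard⟩, ⟨hadj, hm1S⟩, hm0⟩ := hS
    rw [Finset.mem_filter, Finset.mem_powersetCard]
    have hsub' : S.erase (m+1) ⊆ Finset.range (m+1) := by
      intro i hi
      rw [Finset.mem_erase] at hi
      obtain ⟨hne, hiS⟩ := hi
      have := hsub hiS
      rw [Finset.mem_range] at this ⊢
      omega
    have hT : ∀ i ∈ S.erase (m+1), i < m + 1 := by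
      intro i hi; have := hsub' hi; rw [Finset.mem_range] at this; omega
    have hmT : m ∈ S.erase (m+1) := Finset.mem_erase.2 ⟨by omega, hm0⟩
    have hins : insert (m+1) (S.erase (m+1)) = S := Finset.insert_erase hm1S
    have hAdj := adjc_insert_top m (S.erase (m+1)) hT
    rw [hins, if_pos hmT] at hAdj
    refine ⟨⟨hsub', by rw [Finset.card_erase_of_mem hm1S]; omega⟩, by omega, hmT⟩
  case hj =>
    rintro T hT
    rw [Finset.mem_filter, Finset.mem_powersetCard] at hT
    obtain ⟨⟨hsub, hcard⟩, hadj, hmT⟩ := hT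
    rw [Finset.mem_filter, Finset.mem_powersetCard]
    have hT' : ∀ i ∈ T, i < m + 1 := by
      intro i hi; have := hsub hi; rw [Finset.mem_range] at this; omega
    have hm1T : m + 1 ∉ T := fun h => by have := hT' _ h; omega
    have hAdj := adjc_insert_top m T hT'
    rw [if_pos hmT] at hAdj
    refine ⟨⟨?_, ?_⟩, ⟨by omega, Finset.mem_insert_self _ _⟩, Finset.mem_insert_of_mem hmT⟩
    · intro i hi
      rw [Finset.mem_insert] at hi
      rw [Finset.mem_range]
      rcases hi with h | h
      · omega
      · have := hT' _ h; omega
    · rw [Finset.card_insert_of_notMem hm1T, hcard]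
  case left_inv =>
    intro S hS
    rw [Finset.mem_filter] at hS
    exact Finset.insert_erase hS.2.1.2
  case right_inv =>
    intro T hT
    rw [Finset.mem_filter, Finset.mem_powersetCard] at hT
    apply Finset.erase_insert
    intro h
    have := hT.1.1 h
    rw [Finset.mem_range] at this
    omega

lemma partA_zero (m k : ℕ) :
    (((Finset.range (m+2)).powersetCard k).filter
      (fun S => (adjc S = 0 ∧ m + 1 ∈ S) ∧ m ∈ S)).card = 0 := by
  rw [Finset.card_eq_zero, Finset.filter_eq_empty_iff]
  rintro S hS ⟨⟨hadj, hm1⟩, hm0⟩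
  have : m + 1 ∈ S.filter (fun i => 0 < i ∧ i - 1 ∈ S) := by
    rw [Finset.mem_filter]
    exact ⟨hm1, by omega, by simpa using hm0⟩
  have : 0 < adjc S := Finset.card_pos.2 ⟨m+1, this⟩
  omega

lemma pascal_comb (s v c : ℕ) :
    s.choose v * c + s.choose (v+1) * c = (s+1).choose (v+1) * c := by
  rw [Nat.choose_succ_succ, Nat.add_mul]

lemma FG (m : ℕ) :
    (∀ k μ, 1 ≤ k → Fc m k μ = (k-1).choose μ * (m+1-k).choose (k-μ))
    ∧ (∀ k μ, 1 ≤ k → k ≤ m → Gc m k μ = (k-1).choose μ * (m-k).choose (k-μ-1)) := by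
  induction m using Nat.strong_induction_on with
  | _ m ih =>
  have hG : ∀ k μ, 1 ≤ k → k ≤ m → Gc m k μ = (k-1).choose μ * (m-k).choose (k-μ-1) := by
    intro k μ hk hkm
    by_cases hμk : k ≤ μ
    · rw [Gc_mu_big m k μ hk hμk, Nat.choose_eq_zero_of_lt (by omega), Nat.zero_mul]
    push_neg at hμk
    obtain _ | _ | M := m
    · omega
    · have hk1 : k = 1 := by omega
      have hμ0 : μ = 0 := by omega
      subst hk1; subst hμ0
      decide
    · obtain _ | t := k
      · omega
      rw [Gc_split M (t+1) μ, bijB M t μ]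
      obtain _ | ν := μ
      · rw [partA_zero M (t+1), Nat.zero_add]
        obtain _ | s := t
        · rw [Fc_zero]
          simp
        · rw [(ih M (by omega)).1 (s+1) 0 (by omega)]
          simp only [Nat.choose_zero_right, Nat.one_mul, Nat.sub_zero,
            Nat.add_sub_cancel]
          congr 1
          omega
      · rw [bijA M t ν]
        obtain _ | s := t
        · omega
        rw [(ih M (by omega)).1 (s+1) (ν+1) (by omega),
            (ih (M+1) (by omega)).2 (s+1) ν (by omega) (by omega)]
        have a1 : s + 1 + 1 - 1 = s + 1 := by omega
        have a2 : M + 2 - (s + 1 + 1) = M - s := by omega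
        have a3 : s + 1 + 1 - (ν + 1) - 1 = s - ν := by omega
        have b1 : s + 1 - 1 = s := by omega
        have b2 : M + 1 - (s + 1) = M - s := by omega
        have b3 : s + 1 - ν - 1 = s - ν := by omega
        have b4 : s + 1 - (ν + 1) = s - ν := by omega
        rw [a1, a2, a3, b1, b2, b3, b4]
        exact pascal_comb s ν _
  have hF : ∀ k μ, 1 ≤ k → Fc m k μ = (k-1).choose μ * (m+1-k).choose (k-μ) := by
    intro k μ hk
    by_cases hμk : k ≤ μ
    · rw [Fc_mu_big m k μ hk hμk, Nat.choose_eq_zero_of_lt (by omega), Nat.zero_mul]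
    push_neg at hμk
    by_cases hkm : m < k
    · rw [Fc_big m k μ hkm]
      have e1 : m + 1 - k = 0 := by omega
      obtain ⟨d, hd⟩ : ∃ d, k - μ = d + 1 := ⟨k - μ - 1, by omega⟩
      rw [e1, hd, Nat.choose_zero_succ, Nat.mul_zero]
    · push_neg at hkm
      have hm1 : 1 ≤ m := le_trans hk hkm
      rw [Fc_split m k μ hm1, hG k μ hk hkm,
          (ih (m-1) (by omega)).1 k μ hk]
      have c1 : m - 1 + 1 - k = m - k := by omega
      have c2 : m + 1 - k = (m - k) + 1 := by omega
      obtain ⟨d, hd⟩ : ∃ d, k - μ = d + 1 := ⟨k - μ - 1, by omega⟩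
      have hd2 : k - μ - 1 = d := by omega
      rw [c1, c2, hd2, hd, Nat.choose_succ_succ, Nat.mul_add]
      exact Nat.add_comm _ _
  exact ⟨hF, hG⟩

def wrd (b : Bool) (S : Finset ℕ) (i : ℕ) : Bool :=
  Bool.xor b (decide ((S ∩ Finset.range i).card % 2 = 1))

lemma wrd_succ (b : Bool) (S : Finset ℕ) (i : ℕ) :
    wrd b S (i+1) = Bool.xor (wrd b S i) (decide (i ∈ S)) := by
  unfold wrd
  by_cases hi : i ∈ S
  · have h1 : S ∩ Finset.range (i+1) = insert i (S ∩ Finset.range i) := by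
      rw [Finset.range_add_one, Finset.inter_insert_of_mem hi]
    have h2 : i ∉ S ∩ Finset.range i := by simp
    rw [h1, Finset.card_insert_of_notMem h2]
    set c := (S ∩ Finset.range i).card
    rcases Nat.mod_two_eq_zero_or_one c with h | h <;>
      simp [hi, Nat.add_mod, h] <;> cases b <;> simp
  · have h1 : S ∩ Finset.range (i+1) = S ∩ Finset.range i := by
      rw [Finset.range_add_one, Finset.inter_insert_of_notMem hi]
    rw [h1]
    simp [hi]

lemma wrd_change (b : Bool) (S : Finset ℕ) (i : ℕ) :
    (wrd b S i ≠ wrd b S (i+1)) ↔ i ∈ S := by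
  rw [wrd_succ]
  by_cases hi : i ∈ S <;> simp [hi]

lemma mu_eq_adjc (n : ℕ) (x : ℕ → Bool) :
    mu n x = adjc ((Finset.range (n-1)).filter (fun i => x i ≠ x (i+1))) := by
  unfold mu adjc
  congr 1
  ext i
  simp only [Finset.mem_filter, Finset.mem_Icc, Finset.mem_range]
  constructor
  · rintro ⟨⟨h1, h2⟩, hA, hB⟩
    have e : i - 1 + 1 = i := by omega
    exact ⟨⟨by omega, hB⟩, by omega, ⟨by omega, by rw [e]; exact hA⟩⟩
  · rintro ⟨⟨h1, h2⟩, hpos, h3, h4⟩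
    have e : i - 1 + 1 = i := by omega
    rw [e] at h4
    exact ⟨⟨by omega, by omega⟩, h4, h2⟩

lemma recover (n : ℕ) (x : ℕ → Bool) :
    ∀ i < n, wrd (x 0) ((Finset.range (n-1)).filter (fun j => x j ≠ x (j+1))) i = x i := by
  intro i
  induction i with
  | zero => intro _; unfold wrd; simp
  | succ i ihi =>
    intro h
    rw [wrd_succ, ihi (by omega)]
    by_cases hmem : i ∈ (Finset.range (n-1)).filter (fun j => x j ≠ x (j+1))
    · have hne : x i ≠ x (i+1) := (Finset.mem_filter.1 hmem).2
      rw [decide_eq_true hmem, Bool.xor_true]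
      cases hxi : x i <;> cases hxi1 : x (i+1) <;> simp_all
    · have heq : x i = x (i+1) := by
        by_contra hcontra
        exact hmem (Finset.mem_filter.2 ⟨Finset.mem_range.2 (by omega), hcontra⟩)
      rw [decide_eq_false hmem, Bool.xor_false]
      exact heq

lemma ext_apply (n : ℕ) (y : Fin n → Bool) (i : ℕ) (h : i < n) :
    ext n y i = y ⟨i, h⟩ := dif_pos h

lemma changeset_wrd (n : ℕ) (b : Bool) (S : Finset ℕ) (hS : S ⊆ Finset.range (n-1)) :
    (Finset.range (n-1)).filter
      (fun i => ext n (fun t => wrd b S t) i ≠ ext n (fun t => wrd b S t) (i+1)) = S := by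
  ext i
  simp only [Finset.mem_filter, Finset.mem_range]
  constructor
  · rintro ⟨h1, h2⟩
    have e1 : ext n (fun t => wrd b S t) i = wrd b S i :=
      ext_apply n _ i (by omega)
    have e2 : ext n (fun t => wrd b S t) (i+1) = wrd b S (i+1) :=
      ext_apply n _ (i+1) (by omega)
    rw [e1, e2] at h2
    exact (wrd_change b S i).1 h2
  · intro hi
    have h1 : i < n - 1 := Finset.mem_range.1 (hS hi)
    have e1 : ext n (fun t => wrd b S t) i = wrd b S i :=
      ext_apply n _ i (by omega)
    have e2 : ext n (fun t => wrd b S t) (i+1) = wrd b S (i+1) :=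
      ext_apply n _ (i+1) (by omega)
    refine ⟨h1, ?_⟩
    rw [e1, e2]
    exact (wrd_change b S i).2 hi

lemma wrd_zero (b : Bool) (S : Finset ℕ) : wrd b S 0 = b := by
  unfold wrd; simp

lemma words_card (n ρ μ : ℕ) (h2 : 2 ≤ ρ) (hn : ρ ≤ n) :
    ((Finset.univ : Finset (Fin n → Bool)).filter
        (fun y => rho n (ext n y) = ρ ∧ mu n (ext n y) = μ)).card =
    ((Finset.univ : Finset Bool) ×ˢ
      (((Finset.range (n-1)).powersetCard (ρ-1)).filter (fun S => adjc S = μ))).card := by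
  apply Finset.card_bij'
    (i := fun y _ => (ext n y 0,
      (Finset.range (n-1)).filter (fun i => ext n y i ≠ ext n y (i+1))))
    (j := fun p _ => fun t : Fin n => wrd p.1 p.2 t)
  case hi =>
    intro y hy
    rw [Finset.mem_filter] at hy
    obtain ⟨-, hρ, hμ⟩ := hy
    rw [Finset.mem_product, Finset.mem_filter, Finset.mem_powersetCard]
    dsimp only
    refine ⟨Finset.mem_univ _, ⟨Finset.filter_subset _ _, ?_⟩, ?_⟩
    · unfold rho at hρ; omega
    · rw [mu_eq_adjc] at hμ; exact hμ
  case hj =>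
    rintro ⟨b, S⟩ hp
    rw [Finset.mem_product, Finset.mem_filter, Finset.mem_powersetCard] at hp
    obtain ⟨-, ⟨hsub, hcard⟩, hadj⟩ := hp
    rw [Finset.mem_filter]
    refine ⟨Finset.mem_univ _, ?_, ?_⟩
    · unfold rho
      have := changeset_wrd n b S hsub
      have he : (fun t : Fin n => wrd b S t) = fun t : Fin n => wrd b S t := rfl
      rw [show ((Finset.range (n-1)).filter
          (fun i => ext n (fun t : Fin n => wrd b S t) i ≠
            ext n (fun t : Fin n => wrd b S t) (i+1))) = S from this, hcard]
      omega
    · rw [mu_eq_adjc, changeset_wrd n b S hsub, hadj]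
  case left_inv =>
    intro y hy
    funext t
    dsimp only
    have h0 : ext n y 0 = y ⟨0, by omega⟩ := ext_apply n y 0 (by omega)
    have := recover n (ext n y) t (t.2)
    rw [this]
    exact ext_apply n y t t.2
  case right_inv =>
    rintro ⟨b, S⟩ hp
    rw [Finset.mem_product, Finset.mem_filter, Finset.mem_powersetCard] at hp
    obtain ⟨-, ⟨hsub, hcard⟩, hadj⟩ := hp
    have h1 : ext n (fun t : Fin n => wrd b S t) 0 = wrd b S 0 :=
      ext_apply n _ 0 (by omega)
    rw [Prod.ext_iff]
    dsimp only
    exact ⟨by rw [h1, wrd_zero], changeset_wrd n b S hsub⟩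

theorem count_words_by_runs (n ρ μ : ℕ) (h2 : 2 ≤ ρ) (hn : ρ ≤ n)
    (hμ : μ ≤ ρ - 2) :
    ((Finset.univ : Finset (Fin n → Bool)).filter
        (fun y => rho n (ext n y) = ρ ∧ mu n (ext n y) = μ)).card =
      2 * (ρ - 2).choose μ * (n - ρ + 1).choose (ρ - μ - 1) := by
  rw [words_card n ρ μ h2 hn, Finset.card_product]
  have hD : (((Finset.range (n-1)).powersetCard (ρ-1)).filter
      (fun S => adjc S = μ)).card = Fc (n-1) (ρ-1) μ := rfl
  have hu : (Finset.univ : Finset Bool).card = 2 := by simp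
  rw [hD, hu, (FG (n-1)).1 (ρ-1) μ (by omega)]
  have e1 : ρ - 1 - 1 = ρ - 2 := by omega
  have e2 : n - 1 + 1 - (ρ - 1) = n - ρ + 1 := by omega
  have e3 : ρ - 1 - μ = ρ - μ - 1 := by omega
  rw [e1, e2, e3, Nat.mul_assoc]
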